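/- (Stochastic Banach Principle, part ii, commutative case with finite measure.) Let $B$ be a Banach space, $(\Omega,\mu)$ a finite measure space, and $A_n : B \to L^0(\Omega,\mu)$ linear maps, each continuous in measure. Suppose for each $b \in B$, $\lim_{\lambda\to\infty}\sup_n \mu(\{|A_n(b)| > \lambda\}) = 0$. Then there exists $C : \mathbb{R}_+ \to \mathbb{R}_+$ with $\lim_{\lambda\to\infty} C(\lambda) = 0$ such that $\sup_n \mu(\{|A_n(b)| > \lambda \|b\|\}) \leq C(\lambda)$ for every $b \in B$ with $b \neq 0$ and every $\lambda > 0$. -/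

import Mathlib

open MeasureTheory Filter
open scoped ENNReal Topology

/-- (Stochastic Banach principle, part ii, commutative case, finite
measure.)  Let `B` be a Banach space, `(Ω, μ)` a finite measure space, and
`Aₙ : B → L⁰(Ω, μ)` linear maps, each continuous in measure.  If for each `b`
`sup_n μ{|Aₙ(b)| > λ} → 0` as `λ → ∞`, then there is `C : ℝ₊ → ℝ≥0∞` with
`C(λ) → 0` as `λ → ∞` and `sup_n μ{|Aₙ(b)| > λ‖b‖} ≤ C(λ)` for all `b ≠ 0`, `λ > 0`. -/
theorem stochastic_banach_principle_ii
    {B : Type*} [NormedAddCommGroup B] [NormedSpace ℝ B] [CompleteSpace B]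
    {Ω : Type*} [MeasurableSpace Ω] (μ : Measure Ω) [IsFiniteMeasure μ]
    (A : ℕ → B →ₗ[ℝ] Ω → ℝ)
    (hmeas : ∀ n b, Measurable (A n b))
    -- each `Aₙ` is continuous in measure:
    (hcont : ∀ (n : ℕ) (b : ℕ → B) (b₀ : B), Tendsto b atTop (𝓝 b₀) →
      ∀ ε > (0 : ℝ), Tendsto (fun k => μ {ω | ε < |A n (b k) ω - A n b₀ ω|}) atTop (𝓝 0))
    -- uniform stochastic boundedness at each point:
    (hpt : ∀ b : B, Tendsto (fun lam : ℝ => ⨆ n, μ {ω | lam < |A n b ω|}) atTop (𝓝 0)) :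
    ∃ C : ℝ → ℝ≥0∞, Tendsto C atTop (𝓝 0) ∧
      ∀ (n : ℕ) (b : B), b ≠ 0 → ∀ lam : ℝ, 0 < lam →
        μ {ω | lam * ‖b‖ < |A n b ω|} ≤ C lam := by
  -- Key claim: for each ε > 0 there is a threshold that works uniformly on the unit sphere.
  have key : ∀ ε : ℝ≥0∞, 0 < ε → ∃ lam₀ : ℝ,
      ∀ (n : ℕ) (b : B), ‖b‖ = 1 → μ {ω | lam₀ < |A n b ω|} ≤ ε := by
    intro ε hε
    have hε2 : (0 : ℝ≥0∞) < ε / 2 := ENNReal.half_pos hε.ne'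
    set F : ℕ → Set B := fun m =>
      {b | ∀ (n : ℕ) (δ : ℝ), 0 < δ → μ {ω | (m : ℝ) + δ < |A n b ω|} ≤ ε / 2} with hF
    have hclosed : ∀ m, IsClosed (F m) := by
      intro m
      apply IsSeqClosed.isClosed
      intro bs b₀ hbs hlim
      intro n δ hδ
      have hdiff := hcont n bs b₀ hlim (δ / 2) (by linarith)
      have hbound : ∀ k, μ {ω | (m : ℝ) + δ < |A n b₀ ω|}
          ≤ ε / 2 + μ {ω | δ / 2 < |A n (bs k) ω - A n b₀ ω|} := by
        intro k
        refine le_trans (measure_mono ?_) (le_trans (measure_union_le _ _)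
          (add_le_add_left (hbs k n (δ / 2) (by linarith)) _))
        intro ω hω
        simp only [Set.mem_setOf_eq, Set.mem_union] at hω ⊢
        by_cases h : (m : ℝ) + δ / 2 < |A n (bs k) ω|
        · exact Or.inl h
        · right
          push_neg at h
          have h2 := abs_sub_abs_le_abs_sub (A n b₀ ω) (A n (bs k) ω)
          rw [abs_sub_comm] at h2
          linarith
      have h2 : Tendsto (fun k => ε / 2 + μ {ω | δ / 2 < |A n (bs k) ω - A n b₀ ω|})
          atTop (𝓝 (ε / 2)) := by
        simpa using hdiff.const_add (ε / 2)
      exact ge_of_tendsto' h2 hbound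
    have hcover : ⋃ m, F m = Set.univ := by
      rw [Set.eq_univ_iff_forall]
      intro b
      obtain ⟨lam, hlam⟩ := (ENNReal.tendsto_nhds_zero.mp (hpt b) (ε / 2) hε2).exists
      refine Set.mem_iUnion.mpr ⟨⌈lam⌉₊, fun n δ hδ => ?_⟩
      refine le_trans (measure_mono ?_) (le_trans (le_iSup (fun n => μ {ω | lam < |(A n) b ω|}) n) hlam)
      intro ω hω
      simp only [Set.mem_setOf_eq] at hω ⊢
      have := Nat.le_ceil lam
      linarith
    obtain ⟨m, hm⟩ := nonempty_interior_of_iUnion_of_closed hclosed hcover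
    obtain ⟨b₀, hb₀⟩ := hm
    obtain ⟨r, hr, hball⟩ := Metric.mem_nhds_iff.mp (mem_interior_iff_mem_nhds.mp hb₀)
    refine ⟨2 * ((m : ℝ) + 1) * (2 / r), ?_⟩
    intro n b hb
    set b' : B := (r / 2) • b with hb'def
    have hmem0 : b₀ ∈ F m := hball (Metric.mem_ball_self hr)
    have hmem1 : b₀ + b' ∈ F m := by
      apply hball
      simp only [Metric.mem_ball, dist_eq_norm, add_sub_cancel_left]
      rw [hb'def, norm_smul, hb]
      simp only [Real.norm_eq_abs, abs_of_pos (by linarith : (0:ℝ) < r / 2), mul_one]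
      linarith
    have h1 := hmem1 n 1 one_pos
    have h0 := hmem0 n 1 one_pos
    have hsub : {ω | 2 * ((m : ℝ) + 1) * (2 / r) < |A n b ω|}
        ⊆ {ω | (m : ℝ) + 1 < |A n (b₀ + b') ω|} ∪ {ω | (m : ℝ) + 1 < |A n b₀ ω|} := by
      intro ω hω
      simp only [Set.mem_setOf_eq, Set.mem_union] at hω ⊢
      have hAb' : A n b' ω = (r / 2) * A n b ω := by
        rw [hb'def, LinearMap.map_smul]
        simp [smul_eq_mul]
      have hsplit : A n (b₀ + b') ω = A n b₀ ω + A n b' ω := by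
        rw [map_add]; simp
      by_contra hcon
      push_neg at hcon
      obtain ⟨hc1, hc2⟩ := hcon
      have habs : |A n b' ω| ≤ |A n (b₀ + b') ω| + |A n b₀ ω| := by
        have h3 : A n b' ω = A n (b₀ + b') ω + -(A n b₀ ω) := by rw [hsplit]; ring
        calc |A n b' ω| = |A n (b₀ + b') ω + -(A n b₀ ω)| := by rw [h3]
          _ ≤ |A n (b₀ + b') ω| + |-(A n b₀ ω)| := abs_add_le _ _
          _ = |A n (b₀ + b') ω| + |A n b₀ ω| := by rw [abs_neg]
      have hval : |A n b' ω| = (r / 2) * |A n b ω| := by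
        rw [hAb', abs_mul, abs_of_pos (by linarith : (0:ℝ) < r / 2)]
      have : (r / 2) * (2 * ((m : ℝ) + 1) * (2 / r)) < (r / 2) * |A n b ω| := by
        apply mul_lt_mul_of_pos_left hω (by linarith)
      have heq : (r / 2) * (2 * ((m : ℝ) + 1) * (2 / r)) = 2 * ((m : ℝ) + 1) := by
        field_simp
      rw [heq] at this
      linarith
    calc μ {ω | 2 * ((m : ℝ) + 1) * (2 / r) < |A n b ω|}
        ≤ μ ({ω | (m : ℝ) + 1 < |A n (b₀ + b') ω|} ∪ {ω | (m : ℝ) + 1 < |A n b₀ ω|}) :=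
          measure_mono hsub
      _ ≤ μ {ω | (m : ℝ) + 1 < |A n (b₀ + b') ω|} + μ {ω | (m : ℝ) + 1 < |A n b₀ ω|} :=
          measure_union_le _ _
      _ ≤ ε / 2 + ε / 2 := add_le_add h1 h0
      _ = ε := ENNReal.add_halves ε
  -- Define C as the sup over the unit sphere.
  set C : ℝ → ℝ≥0∞ := fun lam => ⨆ (p : {b : B // ‖b‖ = 1}) (n : ℕ),
    μ {ω | lam < |A n p.1 ω|} with hC
  refine ⟨C, ?_, ?_⟩
  · rw [ENNReal.tendsto_nhds_zero]
    intro ε hε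
    obtain ⟨lam₀, hlam₀⟩ := key ε hε
    filter_upwards [eventually_ge_atTop lam₀] with lam hlam
    refine iSup₂_le fun p n => ?_
    refine le_trans (measure_mono ?_) (hlam₀ n p.1 p.2)
    intro ω hω
    simp only [Set.mem_setOf_eq] at hω ⊢
    linarith
  · intro n b hb lam hlam
    have hbpos : (0 : ℝ) < ‖b‖ := norm_pos_iff.mpr hb
    set u : B := ‖b‖⁻¹ • b with hu_def
    have hu : ‖u‖ = 1 := norm_smul_inv_norm hb
    have hset : {ω | lam * ‖b‖ < |A n b ω|} = {ω | lam < |A n u ω|} := by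
      ext ω
      simp only [Set.mem_setOf_eq]
      have hAu : A n u ω = ‖b‖⁻¹ * A n b ω := by
        rw [hu_def, LinearMap.map_smul]; simp [smul_eq_mul]
      rw [hAu, abs_mul, abs_of_pos (inv_pos.mpr hbpos)]
      rw [lt_inv_mul_iff₀ hbpos]
      constructor
      · intro h; linarith [mul_comm lam ‖b‖]
      · intro h; linarith [mul_comm (‖b‖) lam]
    rw [hset]
    exact le_iSup₂ (f := fun (p : {b : B // ‖b‖ = 1}) (n : ℕ) =>
      μ {ω | lam < |A n p.1 ω|}) ⟨u, hu⟩ n
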